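/- arXiv:1707.01224 — 2 statements merged into one kernel-verified Lean document; each statement's English description precedes it below -/
import Mathlib

section
/- Let G be a Cayley graph of a finitely generated group with exponential growth rate α = lim_k |B(k)|^{1/k} > 1. Then G does not satisfy exponential containment of any rate λ < α; hence the critical rate λ_c(G) equals α. -/
open scoped ENNReal NNReal

namespace Firefight

variable {V : Type*}

/-- Vertices protected before round `n+1`'s spread: the strategy `s` plays `s n` in round `n+1`. -/
def protSet (s : ℕ → Set V) : ℕ → Set V
  | 0 => ∅
  | n + 1 => protSet s n ∪ s n

/-- Burning vertices after `n` rounds. -/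
def burnSet (G : SimpleGraph V) (X₀ : Set V) (s : ℕ → Set V) : ℕ → Set V
  | 0 => X₀
  | n + 1 => burnSet G X₀ s n ∪
      {v | v ∉ protSet s (n + 1) ∧ ∃ u ∈ burnSet G X₀ s n, G.Adj u v}

/-- A strategy is valid for the budget sequence `f` if in round `n+1` it protects at most
`f (n+1)` vertices, none of which is already burning. -/
def ValidStrategy (G : SimpleGraph V) (f : ℕ → ℕ) (X₀ : Set V) (s : ℕ → Set V) : Prop :=
  ∀ n, (s n).Finite ∧ (s n).ncard ≤ f (n + 1) ∧ Disjoint (s n) (burnSet G X₀ s n)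

/-- The fire is contained: only finitely many vertices ever burn. -/
def ContainsFire (G : SimpleGraph V) (X₀ : Set V) (s : ℕ → Set V) : Prop :=
  (⋃ n, burnSet G X₀ s n).Finite

/-- `G` satisfies `f_n`-containment. -/
def Containment (G : SimpleGraph V) (f : ℕ → ℕ) : Prop :=
  ∀ X₀ : Set V, X₀.Finite → ∃ s, ValidStrategy G f X₀ s ∧ ContainsFire G X₀ s

/-- Exponential containment of rate `lam`: `f_n`-containment for some `f_n = O(lam ^ n)`. -/
def ExpContainment (G : SimpleGraph V) (lam : ℝ≥0∞) : Prop :=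
  ∃ f : ℕ → ℕ, (∃ c : ℝ≥0, ∀ n, (f n : ℝ≥0∞) ≤ c * lam ^ n) ∧ Containment G f

/-- The critical exponential containment rate. -/
noncomputable def lambdaC (G : SimpleGraph V) : ℝ≥0∞ :=
  sInf {lam | ExpContainment G lam}

/-- A set of edges whose removal leaves the root `r` in a finite component. -/
def IsCutset (G : SimpleGraph V) (r : V) (Cut : Set (Sym2 V)) : Prop :=
  Cut ⊆ G.edgeSet ∧ {v | (G.deleteEdges Cut).Reachable r v}.Finite

/-- The distance `|e|` of an edge from the root: the distance to its farther endpoint. -/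
noncomputable def edgeDist (G : SimpleGraph V) (r : V) (e : Sym2 V) : ℕ :=
  Sym2.lift ⟨fun a b => max (G.dist r a) (G.dist r b), fun a b => max_comm _ _⟩ e

/-- `∑_{e ∈ Cut} lam ^ {-|e|}`. -/
noncomputable def cutsetWeight (G : SimpleGraph V) (r : V) (lam : ℝ≥0∞)
    (Cut : Set (Sym2 V)) : ℝ≥0∞ :=
  ∑' e : Cut, (lam ^ edgeDist G r (e : Sym2 V))⁻¹

/-- The branching number of a tree rooted at `r`. -/
noncomputable def branchingNumber (G : SimpleGraph V) (r : V) : ℝ≥0∞ :=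
  sSup {lam : ℝ≥0∞ | ∃ ε : ℝ≥0∞, 0 < ε ∧ ∀ Cut, IsCutset G r Cut → ε ≤ cutsetWeight G r lam Cut}

/-- The ball of radius `k` about `r`. -/
def ball (G : SimpleGraph V) (r : V) (k : ℕ) : Set V :=
  {v | G.dist r v ≤ k}

end Firefight

open Firefight

/-- The Cayley graph of a group `Γ` with respect to a set `S` of generators
(edges correspond to right multiplication by a generator or its inverse). -/
def cayley (Γ : Type*) [Group Γ] (S : Set Γ) : SimpleGraph Γ where
  Adj v w := v ≠ w ∧ (v⁻¹ * w ∈ S ∨ w⁻¹ * v ∈ S)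
  symm := ⟨fun v w h => ⟨h.1.symm, h.2.symm⟩⟩
  loopless := ⟨fun v h => h.1 rfl⟩

section Aux

variable {V : Type*} {G : SimpleGraph V} {s : ℕ → Set V} {X₀ : Set V} {f : ℕ → ℕ}

namespace Firefight

lemma protSet_mono (s : ℕ → Set V) : Monotone (protSet s) := by
  apply monotone_nat_of_le_succ
  intro n
  exact Set.subset_union_left

lemma subset_protSet_succ (s : ℕ → Set V) (n : ℕ) : s n ⊆ protSet s (n + 1) :=
  Set.subset_union_right

lemma protSet_finite (hs : ∀ n, (s n).Finite) (n : ℕ) : (protSet s n).Finite := by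
  induction n with
  | zero => simp [protSet]
  | succ n ih => exact ih.union (hs n)

lemma protSet_ncard_le (hv : ValidStrategy G f X₀ s) (n : ℕ) :
    (protSet s n).ncard ≤ ∑ m ∈ Finset.range n, f (m + 1) := by
  induction n with
  | zero => simp [protSet]
  | succ n ih =>
    calc (protSet s (n+1)).ncard ≤ (protSet s n).ncard + (s n).ncard :=
          Set.ncard_union_le _ _
      _ ≤ (∑ m ∈ Finset.range n, f (m + 1)) + f (n + 1) :=
          add_le_add ih (hv n).2.1
      _ = ∑ m ∈ Finset.range (n+1), f (m + 1) := (Finset.sum_range_succ _ _).symm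

lemma burnSet_mono (G : SimpleGraph V) (X₀ : Set V) (s : ℕ → Set V) :
    Monotone (burnSet G X₀ s) := by
  apply monotone_nat_of_le_succ
  intro n
  exact Set.subset_union_left

lemma ball_mono (G : SimpleGraph V) (r : V) {k k' : ℕ} (h : k ≤ k') :
    ball G r k ⊆ ball G r k' := fun v hv => le_trans hv h

lemma mem_ball_self (G : SimpleGraph V) (r : V) (k : ℕ) : r ∈ ball G r k := by
  simp [ball, SimpleGraph.dist_self]

/-- helper: card of a finite bUnion -/
lemma ncard_biUnion_le {ι : Type*} [DecidableEq ι] (t : Finset ι) (g : ι → Set V)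
    (hg : ∀ i, (g i).Finite) : (⋃ i ∈ t, g i).ncard ≤ ∑ i ∈ t, (g i).ncard := by
  classical
  induction t using Finset.induction_on with
  | empty => simp
  | @insert a t ha ih =>
    rw [Finset.set_biUnion_insert, Finset.sum_insert ha]
    exact le_trans (Set.ncard_union_le _ _) (add_le_add le_rfl ih)

end Firefight

end Aux

section Cayley

variable {Γ : Type*} [Group Γ] {S : Set Γ}

lemma cayley_adj_mul (g : Γ) {u v : Γ} (h : (cayley Γ S).Adj u v) :
    (cayley Γ S).Adj (g * u) (g * v) := by
  obtain ⟨hne, hS⟩ := h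
  refine ⟨fun he => hne (mul_left_cancel he), ?_⟩
  simpa [mul_assoc] using hS

lemma cayley_walk_mul (g : Γ) {u v : Γ} (p : (cayley Γ S).Walk u v) :
    ∃ q : (cayley Γ S).Walk (g * u) (g * v), q.length = p.length := by
  induction p with
  | nil => exact ⟨SimpleGraph.Walk.nil, rfl⟩
  | cons h p ih =>
    obtain ⟨q, hq⟩ := ih
    exact ⟨SimpleGraph.Walk.cons (cayley_adj_mul g h) q, by simp [hq]⟩

lemma cayley_reachable_mul (g : Γ) {u v : Γ} (h : (cayley Γ S).Reachable u v) :
    (cayley Γ S).Reachable (g * u) (g * v) := by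
  obtain ⟨p⟩ := h
  obtain ⟨q, -⟩ := cayley_walk_mul g p
  exact ⟨q⟩

lemma cayley_connected (hgen : Subgroup.closure S = ⊤) : (cayley Γ S).Connected := by
  have key : ∀ g : Γ, (cayley Γ S).Reachable 1 g := by
    intro g
    have hg : g ∈ Subgroup.closure S := hgen ▸ Subgroup.mem_top g
    induction hg using Subgroup.closure_induction with
    | mem x hx =>
      rcases eq_or_ne x 1 with rfl | hne
      · exact SimpleGraph.Reachable.refl _
      · exact SimpleGraph.Adj.reachable ⟨hne.symm, Or.inl (by simpa using hx)⟩
    | one => exact SimpleGraph.Reachable.refl _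
    | mul x y hx hy ihx ihy =>
      have h2 : (cayley Γ S).Reachable x (x * y) := by
        have := cayley_reachable_mul x ihy
        rwa [mul_one] at this
      exact ihx.trans h2
    | inv x hx ih =>
      have h2 := cayley_reachable_mul x⁻¹ ih
      rw [mul_one, inv_mul_cancel] at h2
      exact h2.symm
  have : Nonempty Γ := ⟨1⟩
  refine ⟨fun u v => ?_⟩
  have h2 := cayley_reachable_mul u (key (u⁻¹ * v))
  rw [mul_one, mul_inv_cancel_left] at h2
  exact h2

lemma cayley_reachable_mul_iff (g : Γ) {u v : Γ} :
    (cayley Γ S).Reachable (g * u) (g * v) ↔ (cayley Γ S).Reachable u v := by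
  constructor
  · intro h
    have := cayley_reachable_mul g⁻¹ h
    simpa [← mul_assoc] using this
  · exact cayley_reachable_mul g

lemma cayley_dist_mul (g u v : Γ) :
    (cayley Γ S).dist (g * u) (g * v) = (cayley Γ S).dist u v := by
  have le1 : ∀ (g u v : Γ), (cayley Γ S).dist (g * u) (g * v) ≤ (cayley Γ S).dist u v := by
    intro g u v
    by_cases hr : (cayley Γ S).Reachable u v
    · obtain ⟨p, hp⟩ := hr.exists_walk_length_eq_dist
      obtain ⟨q, hq⟩ := cayley_walk_mul g p
      exact hp ▸ hq ▸ SimpleGraph.dist_le q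
    · have hr2 : ¬ (cayley Γ S).Reachable (g * u) (g * v) := by
        rw [cayley_reachable_mul_iff]; exact hr
      simp [SimpleGraph.dist_eq_zero_of_not_reachable hr2]
  refine le_antisymm (le1 g u v) ?_
  have := le1 g⁻¹ (g * u) (g * v)
  simpa [← mul_assoc] using this

lemma cayley_ball_translate (g : Γ) (m : ℕ) :
    {v : Γ | (cayley Γ S).dist g v ≤ m} = (fun u => g * u) '' ball (cayley Γ S) 1 m := by
  ext v
  simp only [Set.mem_image, Set.mem_setOf_eq, ball]
  constructor
  · intro h
    refine ⟨g⁻¹ * v, ?_, by group⟩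
    have h2 : (cayley Γ S).dist 1 (g⁻¹ * v) = (cayley Γ S).dist (g * 1) (g * (g⁻¹ * v)) :=
      (cayley_dist_mul g 1 (g⁻¹ * v)).symm
    rw [h2, mul_one, mul_inv_cancel_left]
    exact h
  · rintro ⟨u, hu, rfl⟩
    have h2 : (cayley Γ S).dist g (g * u) = (cayley Γ S).dist 1 u := by
      have := cayley_dist_mul (S := S) g 1 u
      rwa [mul_one] at this
    rw [h2]
    exact hu

end Cayley

section Walks

variable {V : Type*} {G : SimpleGraph V}

lemma adj_dist_le {u v : V} (h : G.Adj u v) : G.dist u v ≤ 1 := by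
  have := SimpleGraph.dist_le h.toWalk
  simpa using this

lemma dist_getVert_le (hc : G.Connected) {r v : V} (p : G.Walk r v) (j : ℕ) :
    G.dist r (p.getVert j) ≤ j := by
  induction j with
  | zero => simp [SimpleGraph.Walk.getVert_zero, SimpleGraph.dist_self]
  | succ j ih =>
    by_cases hj : j < p.length
    · calc G.dist r (p.getVert (j+1))
          ≤ G.dist r (p.getVert j) + G.dist (p.getVert j) (p.getVert (j+1)) :=
            hc.dist_triangle
        _ ≤ j + 1 := add_le_add ih (adj_dist_le (p.adj_getVert_succ hj))
    · rw [SimpleGraph.Walk.getVert_of_length_le p (by omega : p.length ≤ j + 1),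
        ← SimpleGraph.Walk.getVert_of_length_le p (by omega : p.length ≤ j)]
      exact le_trans ih (by omega)

lemma dist_getVert_end_le (hc : G.Connected) {r v : V} (p : G.Walk r v) :
    ∀ i j, j + i = p.length → G.dist (p.getVert j) v ≤ i := by
  intro i
  induction i with
  | zero =>
    intro j hj
    rw [show j = p.length by omega, SimpleGraph.Walk.getVert_length,
      SimpleGraph.dist_self]
  | succ i ih =>
    intro j hj
    calc G.dist (p.getVert j) v
        ≤ G.dist (p.getVert j) (p.getVert (j+1)) + G.dist (p.getVert (j+1)) v :=
          hc.dist_triangle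
      _ ≤ 1 + i := add_le_add (adj_dist_le (p.adj_getVert_succ (by omega))) (ih (j+1) (by omega))
      _ = i + 1 := by omega

lemma dist_getVert_eq (hc : G.Connected) {r v : V} (p : G.Walk r v)
    (hgeo : p.length = G.dist r v) {j : ℕ} (hj : j ≤ p.length) :
    G.dist r (p.getVert j) = j := by
  refine le_antisymm (dist_getVert_le hc p j) ?_
  have h1 : G.dist (p.getVert j) v ≤ p.length - j :=
    dist_getVert_end_le hc p (p.length - j) j (by omega)
  have h2 : G.dist r v ≤ G.dist r (p.getVert j) + G.dist (p.getVert j) v :=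
    hc.dist_triangle
  omega

end Walks

section Count

variable {Γ : Type*} [Group Γ] {S : Set Γ}

/-- Timely-protected vertices at distance `k`. -/
def Dset (S : Set Γ) (s : ℕ → Set Γ) (k0 k : ℕ) : Set Γ :=
  {w : Γ | (cayley Γ S).dist 1 w = k ∧ w ∈ protSet s (k - k0)}

lemma Dset_finite {s : ℕ → Set Γ} (hs : ∀ n, (s n).Finite) (k0 k : ℕ) :
    (Dset S s k0 k).Finite :=
  (protSet_finite hs (k - k0)).subset (fun _ hw => hw.2)

lemma count_key (hc : (cayley Γ S).Connected)
    (hfin : ∀ k, (ball (cayley Γ S) 1 k).Finite)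
    {k0 : ℕ} {s : ℕ → Set Γ} (hs : ∀ n, (s n).Finite)
    (hB : (⋃ m, burnSet (cayley Γ S) (ball (cayley Γ S) 1 k0) s m).Finite)
    (n : ℕ) :
    (ball (cayley Γ S) 1 n).ncard ≤
      ((⋃ m, burnSet (cayley Γ S) (ball (cayley Γ S) 1 k0) s m) ∪
        ball (cayley Γ S) 1 k0).ncard +
      ∑ k ∈ Finset.Icc (k0 + 1) n,
        (Dset S s k0 k).ncard * (ball (cayley Γ S) 1 (n - k)).ncard := by
  classical
  set G := cayley Γ S with hG
  set X₀ := ball G 1 k0 with hX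
  set Big := (⋃ m, burnSet G X₀ s m) ∪ X₀ with hBig
  have hBigfin : Big.Finite := hB.union (hfin k0)
  set U : ℕ → Set Γ := fun k => ⋃ w ∈ Dset S s k0 k, {v | G.dist w v ≤ n - k} with hU
  have hUfin : ∀ k, (U k).Finite := by
    intro k
    refine (Dset_finite hs k0 k).biUnion (fun w _ => ?_)
    rw [cayley_ball_translate]
    exact (hfin (n - k)).image _
  -- the inclusion
  have hincl : ball G 1 n ⊆ Big ∪ ⋃ k ∈ Finset.Icc (k0 + 1) n, U k := by
    intro v hv
    by_cases hvB : v ∈ Big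
    · exact Or.inl hvB
    have hvu : v ∉ ⋃ m, burnSet G X₀ s m := fun h => hvB (Or.inl h)
    have hvb : ¬ G.dist 1 v ≤ k0 := fun h => hvB (Or.inr h)
    set n' := G.dist 1 v with hn'
    have hk0n' : k0 < n' := by omega
    have hn'n : n' ≤ n := hv
    obtain ⟨p, hp⟩ := (hc 1 v).exists_walk_length_eq_dist
    have hplen : p.length = n' := hp
    have hclaim : ∃ j, k0 < j ∧ j ≤ n' ∧ p.getVert j ∈ protSet s (j - k0) := by
      by_contra hno
      push_neg at hno
      have hburn : ∀ i, i ≤ n' - k0 → p.getVert (k0 + i) ∈ burnSet G X₀ s i := by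
        intro i
        induction i with
        | zero =>
          intro _
          have h1 : G.dist 1 (p.getVert k0) ≤ k0 := by
            have := dist_getVert_le hc p k0
            simpa using this
          exact h1
        | succ i ih =>
          intro hi
          have h1 := ih (by omega)
          have h2 : p.getVert (k0 + i + 1) ∉ protSet s (k0 + i + 1 - k0) :=
            hno (k0 + i + 1) (by omega) (by omega)
          rw [show k0 + i + 1 - k0 = i + 1 by omega] at h2
          have h3 : G.Adj (p.getVert (k0 + i)) (p.getVert (k0 + i + 1)) :=
            p.adj_getVert_succ (by omega)
          exact Or.inr ⟨h2, p.getVert (k0 + i), h1, h3⟩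
      have h4 := hburn (n' - k0) le_rfl
      rw [show k0 + (n' - k0) = n' by omega] at h4
      have h5 : p.getVert n' = v := by
        rw [← hplen]
        exact p.getVert_length
      rw [h5] at h4
      exact hvu (Set.mem_iUnion.mpr ⟨n' - k0, h4⟩)
    obtain ⟨j, hj1, hj2, hj3⟩ := hclaim
    have hjmem : j ∈ Finset.Icc (k0 + 1) n := Finset.mem_Icc.mpr ⟨by omega, by omega⟩
    refine Or.inr (Set.mem_biUnion hjmem ?_)
    refine Set.mem_biUnion (show p.getVert j ∈ Dset S s k0 j from ⟨?_, hj3⟩) ?_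
    · exact dist_getVert_eq hc p hp (by omega)
    · show G.dist (p.getVert j) v ≤ n - j
      have := dist_getVert_end_le hc p (n' - j) j (by omega)
      exact le_trans this (by omega)
  -- cardinality computations
  have hUcard : ∀ k, (U k).ncard ≤ (Dset S s k0 k).ncard * (ball G 1 (n - k)).ncard := by
    intro k
    have hDf : (Dset S s k0 k).Finite := Dset_finite hs k0 k
    have e1 : U k = ⋃ w ∈ hDf.toFinset, {v | G.dist w v ≤ n - k} := by
      rw [hU]
      congr 1
      ext w
      simp [Set.Finite.mem_toFinset]
    rw [e1]
    calc (⋃ w ∈ hDf.toFinset, {v | G.dist w v ≤ n - k}).ncard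
        ≤ ∑ w ∈ hDf.toFinset, ({v | G.dist w v ≤ n - k}).ncard := by
          refine ncard_biUnion_le _ _ (fun w => ?_)
          rw [cayley_ball_translate]
          exact (hfin (n - k)).image _
      _ = ∑ w ∈ hDf.toFinset, (ball G 1 (n - k)).ncard := by
          refine Finset.sum_congr rfl (fun w _ => ?_)
          rw [cayley_ball_translate]
          exact Set.ncard_image_of_injective _ (mul_right_injective w)
      _ = (Dset S s k0 k).ncard * (ball G 1 (n - k)).ncard := by
          rw [Finset.sum_const, smul_eq_mul, Set.ncard_eq_toFinset_card _ hDf]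
  calc (ball G 1 n).ncard
      ≤ (Big ∪ ⋃ k ∈ Finset.Icc (k0 + 1) n, U k).ncard := by
        refine Set.ncard_le_ncard hincl (hBigfin.union ?_)
        exact (Finset.Icc (k0+1) n).finite_toSet.biUnion (fun k _ => hUfin k)
    _ ≤ Big.ncard + (⋃ k ∈ Finset.Icc (k0 + 1) n, U k).ncard := Set.ncard_union_le _ _
    _ ≤ Big.ncard + ∑ k ∈ Finset.Icc (k0 + 1) n, (U k).ncard := by
        exact add_le_add le_rfl (ncard_biUnion_le _ _ hUfin)
    _ ≤ Big.ncard + ∑ k ∈ Finset.Icc (k0 + 1) n,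
          (Dset S s k0 k).ncard * (ball G 1 (n - k)).ncard := by
        exact add_le_add le_rfl (Finset.sum_le_sum (fun k _ => hUcard k))

end Count

section Lower

open Filter

variable {Γ : Type*} [Group Γ] {S : Set Γ}

lemma balls_finite {α : ℝ}
    (hα : Tendsto (fun k : ℕ => ((ball (cayley Γ S) 1 k).ncard : ℝ) ^ ((k : ℝ)⁻¹))
      atTop (nhds α)) (hα1 : 1 < α) (k : ℕ) :
    (ball (cayley Γ S) 1 k).Finite := by
  by_contra hinf0
  have hinf : (ball (cayley Γ S) 1 k).Infinite := hinf0
  have hev : ∀ᶠ m : ℕ in atTop,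
      ((ball (cayley Γ S) 1 m).ncard : ℝ) ^ ((m : ℝ)⁻¹) = 0 := by
    rw [eventually_atTop]
    refine ⟨max k 1, fun m hm => ?_⟩
    have h1 : (ball (cayley Γ S) 1 m).Infinite :=
      hinf.mono (ball_mono _ _ (le_trans (le_max_left _ _) hm))
    rw [h1.ncard]
    push_cast
    exact Real.zero_rpow (by
      have : 1 ≤ m := le_trans (le_max_right _ _) hm
      positivity)
  have h0 : Tendsto (fun k : ℕ => ((ball (cayley Γ S) 1 k).ncard : ℝ) ^ ((k : ℝ)⁻¹))
      atTop (nhds 0) := Tendsto.congr' (Filter.EventuallyEq.symm hev) tendsto_const_nhds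
  have := tendsto_nhds_unique hα h0
  linarith

lemma no_containment (hgen : Subgroup.closure S = ⊤) {α : ℝ}
    (hα : Tendsto (fun k : ℕ => ((ball (cayley Γ S) 1 k).ncard : ℝ) ^ ((k : ℝ)⁻¹))
      atTop (nhds α)) (hα1 : 1 < α) {lam : ℝ} (hlam1 : 1 < lam) (hlama : lam < α) :
    ¬ ExpContainment (cayley Γ S) (ENNReal.ofReal lam) := by
  set G := cayley Γ S with hG
  have hc : G.Connected := cayley_connected hgen
  have hfin : ∀ k, (ball G 1 k).Finite := balls_finite hα hα1
  rintro ⟨f, ⟨c, hfc⟩, hcont⟩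
  have hlam0 : (0:ℝ) < lam := lt_trans one_pos hlam1
  -- real form of the budget bound
  have hfR : ∀ n, (f n : ℝ) ≤ (c : ℝ) * lam ^ n := by
    intro n
    have h1 := hfc n
    rw [show ((c : ℝ≥0) : ℝ≥0∞) = ENNReal.ofReal (c : ℝ) from
        (ENNReal.ofReal_coe_nnreal).symm,
      ← ENNReal.ofReal_pow hlam0.le, ← ENNReal.ofReal_mul c.coe_nonneg,
      ← ENNReal.ofReal_natCast] at h1
    exact (ENNReal.ofReal_le_ofReal_iff (by positivity)).mp h1
  -- parameters
  set x : ℝ := (lam + α) / 2 with hxdef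
  have hx1 : 1 < x := by rw [hxdef]; linarith
  have hx0 : 0 < x := lt_trans one_pos hx1
  have hlx : lam < x := by rw [hxdef]; linarith
  have hxa : x < α := by rw [hxdef]; linarith
  set r : ℝ := lam / x with hrdef
  have hr0 : 0 ≤ r := by positivity
  have hr1 : r < 1 := (div_lt_one hx0).mpr hlx
  set Q : ℝ := (c : ℝ) * lam / (lam - 1) with hQdef
  have hQ0 : 0 ≤ Q := by
    apply div_nonneg (by positivity)
    linarith
  set K : ℝ := Q * (1 - r)⁻¹ with hKdef
  have hK0 : 0 ≤ K := by
    apply mul_nonneg hQ0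
    rw [inv_nonneg]
    linarith
  obtain ⟨k0, hk0⟩ := exists_pow_lt_of_lt_one
    (show (0:ℝ) < (2 * (K + 1))⁻¹ by positivity) hr1
  have hKr : K * r ^ k0 ≤ 1 / 2 := by
    have h1 : K * r ^ k0 ≤ (K + 1) * r ^ k0 :=
      mul_le_mul_of_nonneg_right (by linarith) (by positivity)
    have h2 : (K + 1) * r ^ k0 ≤ (K + 1) * (2 * (K + 1))⁻¹ :=
      mul_le_mul_of_nonneg_left hk0.le (by linarith)
    have h3 : (K + 1) * (2 * (K + 1))⁻¹ = 1 / 2 := by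
      field_simp
    linarith
  -- sum of budgets
  have hbud : ∀ N : ℕ, (∑ m ∈ Finset.range N, (f (m + 1) : ℝ)) ≤ Q * lam ^ N := by
    intro N
    have h1 : ∀ m ∈ Finset.range N, (f (m + 1) : ℝ) ≤ (c:ℝ) * lam ^ (m+1) :=
      fun m _ => hfR (m + 1)
    calc (∑ m ∈ Finset.range N, (f (m + 1) : ℝ))
        ≤ ∑ m ∈ Finset.range N, (c:ℝ) * lam ^ (m+1) := Finset.sum_le_sum h1
      _ = (c:ℝ) * lam * ∑ m ∈ Finset.range N, lam ^ m := by
          rw [Finset.mul_sum]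
          refine Finset.sum_congr rfl (fun m _ => ?_)
          ring
      _ = (c:ℝ) * lam * ((lam ^ N - 1) / (lam - 1)) := by
          rw [geom_sum_eq (ne_of_gt hlam1)]
      _ ≤ (c:ℝ) * lam * (lam ^ N / (lam - 1)) := by
          refine mul_le_mul_of_nonneg_left ?_ (by positivity)
          apply div_le_div_of_nonneg_right ?_ (by linarith)
          · linarith
      _ = Q * lam ^ N := by
          rw [hQdef]; ring
  -- run the fire
  obtain ⟨s, hvalid, hcfire⟩ := hcont (ball G 1 k0) (hfin k0)
  have hs : ∀ n, (s n).Finite := fun n => (hvalid n).1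
  set b : ℕ → ℝ := fun m => ((ball G 1 m).ncard : ℝ) with hbdef
  have hb0 : ∀ m, 0 ≤ b m := fun m => Nat.cast_nonneg _
  set Ereal : ℝ := (((⋃ m, burnSet G (ball G 1 k0) s m) ∪ ball G 1 k0).ncard : ℝ)
    with hEdef
  have hE0 : 0 ≤ Ereal := Nat.cast_nonneg _
  set a : ℕ → ℝ := fun k => ((Dset S s k0 k).ncard : ℝ) with hadef
  have ha0 : ∀ k, 0 ≤ a k := fun k => Nat.cast_nonneg _
  have hak : ∀ k, a k ≤ Q * lam ^ (k - k0) := by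
    intro k
    have h1 : (Dset S s k0 k).ncard ≤ (protSet s (k - k0)).ncard :=
      Set.ncard_le_ncard (fun w hw => hw.2) (protSet_finite hs _)
    have h2 := protSet_ncard_le hvalid (k - k0)
    calc a k ≤ ((protSet s (k - k0)).ncard : ℝ) := Nat.cast_le.mpr h1
      _ ≤ ((∑ m ∈ Finset.range (k - k0), f (m + 1) : ℕ) : ℝ) := Nat.cast_le.mpr h2
      _ = ∑ m ∈ Finset.range (k - k0), (f (m + 1) : ℝ) := by push_cast; ring
      _ ≤ Q * lam ^ (k - k0) := hbud _
  -- the recursion, in ℝ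
  have hrec : ∀ n, b n ≤ Ereal + ∑ k ∈ Finset.Icc (k0 + 1) n, a k * b (n - k) := by
    intro n
    have h1 := count_key hc hfin hs hcfire n
    have h2 : ((ball G 1 n).ncard : ℝ) ≤
        ((((⋃ m, burnSet G (ball G 1 k0) s m) ∪ ball G 1 k0).ncard +
          ∑ k ∈ Finset.Icc (k0 + 1) n,
            (Dset S s k0 k).ncard * (ball G 1 (n - k)).ncard : ℕ) : ℝ) :=
      Nat.cast_le.mpr h1
    rw [hbdef, hEdef, hadef]
    push_cast at h2 ⊢
    exact h2
  -- the strong induction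
  set A : ℝ := 2 * Ereal + 2 with hAdef
  have hA0 : 0 < A := by rw [hAdef]; linarith
  have hAx : ∀ n, b n ≤ A * x ^ n := by
    intro n
    induction n using Nat.strong_induction_on with
    | _ n ih =>
      have hsum : ∑ k ∈ Finset.Icc (k0 + 1) n, a k * b (n - k) ≤ A * x ^ n * (1/2) := by
        have hterm : ∀ k ∈ Finset.Icc (k0 + 1) n,
            a k * b (n - k) ≤ (A * Q * x ^ n) * r ^ k := by
          intro k hk
          rw [Finset.mem_Icc] at hk
          have hkn : k ≤ n := hk.2
          have hk0k : k0 + 1 ≤ k := hk.1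
          have hbn : b (n - k) ≤ A * x ^ (n - k) := ih (n - k) (by omega)
          have h3 : a k * b (n - k) ≤ (Q * lam ^ (k - k0)) * (A * x ^ (n - k)) := by
            apply mul_le_mul (hak k) hbn (hb0 _)
            positivity
          have h4 : lam ^ (k - k0) ≤ lam ^ k :=
            pow_le_pow_right₀ hlam1.le (by omega)
          have h5 : (Q * lam ^ (k - k0)) * (A * x ^ (n - k)) ≤
              (Q * lam ^ k) * (A * x ^ (n - k)) := by
            apply mul_le_mul_of_nonneg_right _ (by positivity)
            exact mul_le_mul_of_nonneg_left h4 hQ0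
          have h6 : (Q * lam ^ k) * (A * x ^ (n - k)) = (A * Q * x ^ n) * r ^ k := by
            rw [pow_sub₀ x (ne_of_gt hx0) hkn, hrdef, div_pow]
            field_simp
            rw [mul_assoc, ← mul_pow, mul_comm x, div_mul_cancel₀ lam (ne_of_gt hx0)]
          linarith
        calc ∑ k ∈ Finset.Icc (k0 + 1) n, a k * b (n - k)
            ≤ ∑ k ∈ Finset.Icc (k0 + 1) n, (A * Q * x ^ n) * r ^ k :=
              Finset.sum_le_sum hterm
          _ = (A * Q * x ^ n) * ∑ k ∈ Finset.Icc (k0 + 1) n, r ^ k := by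
              rw [Finset.mul_sum]
          _ ≤ (A * Q * x ^ n) * (r ^ k0 * (1 - r)⁻¹) := by
              apply mul_le_mul_of_nonneg_left _ (by positivity)
              have e1 : Finset.Icc (k0 + 1) n = Finset.Ico (k0 + 1) (n + 1) := by
                rw [Finset.Ico_add_one_right_eq_Icc]
              rw [e1, Finset.sum_Ico_eq_sum_range]
              have e2 : ∀ i ∈ Finset.range (n + 1 - (k0 + 1)), r ^ (k0 + 1 + i)
                  = r ^ (k0 + 1) * r ^ i := fun i _ => pow_add r _ _
              rw [Finset.sum_congr rfl e2, ← Finset.mul_sum]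
              have h7 : ∑ i ∈ Finset.range (n + 1 - (k0 + 1)), r ^ i ≤ (1 - r)⁻¹ := by
                refine le_trans (Summable.sum_le_tsum (L := SummationFilter.unconditional ℕ) _ (fun i _ => by positivity) ?_) ?_
                · exact summable_geometric_of_lt_one hr0 hr1
                · rw [tsum_geometric_of_lt_one hr0 hr1]
              have h8 : r ^ (k0 + 1) ≤ r ^ k0 := pow_le_pow_of_le_one hr0 hr1.le (by omega)
              calc r ^ (k0 + 1) * ∑ i ∈ Finset.range (n + 1 - (k0 + 1)), r ^ i
                  ≤ r ^ (k0 + 1) * (1 - r)⁻¹ :=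
                    mul_le_mul_of_nonneg_left h7 (by positivity)
                _ ≤ r ^ k0 * (1 - r)⁻¹ := by
                    apply mul_le_mul_of_nonneg_right h8
                    rw [inv_nonneg]; linarith
          _ = (A * x ^ n) * (K * r ^ k0) := by rw [hKdef]; ring
          _ ≤ (A * x ^ n) * (1/2) := by
              apply mul_le_mul_of_nonneg_left hKr (by positivity)
          _ = A * x ^ n * (1/2) := rfl
      have hEA : Ereal ≤ A * x ^ n * (1/2) := by
        have h9 : (1:ℝ) ≤ x ^ n := one_le_pow₀ hx1.le
        have : Ereal ≤ A * (1/2) := by rw [hAdef]; linarith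
        nlinarith
      calc b n ≤ Ereal + ∑ k ∈ Finset.Icc (k0 + 1) n, a k * b (n - k) := hrec n
        _ ≤ A * x ^ n * (1/2) + A * x ^ n * (1/2) := add_le_add hEA hsum
        _ = A * x ^ n := by ring
  -- contradiction with the growth rate
  have h1 : ∀ n : ℕ, ((ball G 1 n).ncard : ℝ) ^ ((n : ℝ)⁻¹) ≤ (A * x ^ n) ^ ((n : ℝ)⁻¹) :=
    fun n => Real.rpow_le_rpow (hb0 n) (hAx n) (by positivity)
  have h2 : Tendsto (fun n : ℕ => (A * x ^ n) ^ ((n : ℝ)⁻¹)) atTop (nhds x) := by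
    have he : ∀ᶠ n : ℕ in atTop, A ^ ((n : ℝ)⁻¹) * x = (A * x ^ n) ^ ((n : ℝ)⁻¹) := by
      rw [eventually_atTop]
      refine ⟨1, fun n hn => ?_⟩
      have hn0 : (n : ℝ) ≠ 0 := Nat.cast_ne_zero.mpr (by omega)
      rw [Real.mul_rpow hA0.le (by positivity), ← Real.rpow_natCast x n,
        ← Real.rpow_mul hx0.le, mul_inv_cancel₀ hn0, Real.rpow_one]
    have h3 : Tendsto (fun n : ℕ => A ^ ((n : ℝ)⁻¹)) atTop (nhds 1) := by
      have h4 := (Real.continuousAt_const_rpow (ne_of_gt hA0)).tendsto.comp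
        tendsto_inv_atTop_nhds_zero_nat
      simpa [Real.rpow_zero, Function.comp_def] using h4
    have h5 : Tendsto (fun n : ℕ => A ^ ((n : ℝ)⁻¹) * x) atTop (nhds x) := by
      simpa using h3.mul_const x
    exact Tendsto.congr' he h5
  have h6 : α ≤ x := le_of_tendsto_of_tendsto' hα h2 h1
  linarith

end Lower

section Upper

open Filter

variable {Γ : Type*} [Group Γ] {S : Set Γ}

lemma containment_of_gt (hgen : Subgroup.closure S = ⊤) {α : ℝ}
    (hα : Tendsto (fun k : ℕ => ((ball (cayley Γ S) 1 k).ncard : ℝ) ^ ((k : ℝ)⁻¹))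
      atTop (nhds α)) (hα1 : 1 < α) {μ : ℝ} (hμ : α < μ) :
    ExpContainment (cayley Γ S) (ENNReal.ofReal μ) := by
  classical
  set G := cayley Γ S with hG
  have hc : G.Connected := cayley_connected hgen
  have hfin : ∀ k, (ball G 1 k).Finite := balls_finite hα hα1
  have hμ1 : 1 < μ := lt_trans hα1 hμ
  have hμ0 : 0 < μ := lt_trans one_pos hμ1
  set ν : ℝ := (α + μ) / 2 with hνdef
  have hν1 : 1 < ν := by rw [hνdef]; linarith
  have hν0 : 0 < ν := lt_trans one_pos hν1
  have hαν : α < ν := by rw [hνdef]; linarith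
  have hνμ : ν < μ := by rw [hνdef]; linarith
  set b : ℕ → ℝ := fun m => ((ball G 1 m).ncard : ℝ) with hbdef
  have hb0 : ∀ m, 0 ≤ b m := fun m => Nat.cast_nonneg _
  -- growth upper bound
  obtain ⟨k1, hk1⟩ : ∃ k1 : ℕ, ∀ k ≥ k1, b k ^ ((k:ℝ)⁻¹) < ν :=
    eventually_atTop.mp (hα.eventually_lt_const hαν)
  have hgrow : ∃ C : ℝ, 1 ≤ C ∧ ∀ k, b k ≤ C * ν ^ k := by
    set M := max k1 1 with hM
    refine ⟨(∑ i ∈ Finset.range (M + 1), b i) + 1, ?_, ?_⟩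
    · have : 0 ≤ ∑ i ∈ Finset.range (M + 1), b i :=
        Finset.sum_nonneg (fun i _ => hb0 i)
      linarith
    · intro k
      by_cases hk : k ≤ M
      · have h1 : b k ≤ ∑ i ∈ Finset.range (M + 1), b i :=
          Finset.single_le_sum (fun i _ => hb0 i) (Finset.mem_range.mpr (by omega))
        have h2 : (1:ℝ) ≤ ν ^ k := one_le_pow₀ hν1.le
        nlinarith [Finset.sum_nonneg (fun i (_ : i ∈ Finset.range (M+1)) => hb0 i)]
      · have hkM : k ≥ M := by omega
        have hk0 : k ≠ 0 := by omega
        have h3 : b k ^ ((k:ℝ)⁻¹) < ν := hk1 k (by omega)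
        have h4 : b k ≤ ν ^ k := by
          have h5 : (b k ^ ((k:ℝ)⁻¹)) ^ k ≤ ν ^ k :=
            pow_le_pow_left₀ (Real.rpow_nonneg (hb0 k) _) h3.le k
          rwa [Real.rpow_inv_natCast_pow (hb0 k) hk0] at h5
        have h2 : (0:ℝ) ≤ ν ^ k := by positivity
        have : 0 ≤ ∑ i ∈ Finset.range (M + 1), b i :=
          Finset.sum_nonneg (fun i _ => hb0 i)
        nlinarith
  obtain ⟨C, hC1, hC⟩ := hgrow
  have hC0 : 0 < C := lt_of_lt_of_le one_pos hC1
  -- the budget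
  refine ⟨fun n => ⌈μ ^ n⌉₊, ⟨2, ?_⟩, ?_⟩
  · intro n
    have h1 : ((⌈μ ^ n⌉₊ : ℕ) : ℝ) ≤ 2 * μ ^ n := by
      have h2 : (1:ℝ) ≤ μ ^ n := one_le_pow₀ hμ1.le
      have h3 := Nat.ceil_lt_add_one (show (0:ℝ) ≤ μ ^ n by positivity)
      linarith
    calc ((⌈μ ^ n⌉₊ : ℕ) : ℝ≥0∞) = ENNReal.ofReal ((⌈μ ^ n⌉₊ : ℕ) : ℝ) :=
          (ENNReal.ofReal_natCast _).symm
      _ ≤ ENNReal.ofReal (2 * μ ^ n) := ENNReal.ofReal_le_ofReal h1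
      _ = ENNReal.ofReal 2 * ENNReal.ofReal (μ ^ n) := ENNReal.ofReal_mul (by norm_num)
      _ = ((2:ℝ≥0) : ℝ≥0∞) * ENNReal.ofReal μ ^ n := by
          rw [ENNReal.ofReal_pow hμ0.le]
          norm_num
  -- the containment strategy
  intro X₀ hX₀
  set R : ℕ := hX₀.toFinset.sup (G.dist 1) with hRdef
  have hR : ∀ v ∈ X₀, G.dist 1 v ≤ R :=
    fun v hv => Finset.le_sup (hX₀.mem_toFinset.mpr hv)
  obtain ⟨n0, hn0⟩ := exists_pow_lt_of_lt_one
    (show (0:ℝ) < μ / (C * ν ^ (R + 1)) by positivity)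
    (show ν / μ < 1 from (div_lt_one hμ0).mpr hνμ)
  have hkey : ∀ n, n0 ≤ n → C * ν ^ (R + n + 1) ≤ μ ^ (n + 1) := by
    intro n hn
    have h1 : (ν/μ) ^ n ≤ (ν/μ) ^ n0 :=
      pow_le_pow_of_le_one (by positivity) (by
        rw [div_le_one hμ0]; exact hνμ.le) hn
    have h2 : C * ν ^ (R + 1) * (ν/μ) ^ n0 < μ := by
      rw [← lt_div_iff₀' (by positivity)]
      exact hn0
    have h3 : C * ν ^ (R + 1) * (ν/μ) ^ n ≤ μ :=
      le_trans (mul_le_mul_of_nonneg_left h1 (by positivity)) h2.le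
    have e1 : (ν / μ) ^ n * μ ^ n = ν ^ n := by
      rw [div_pow]
      exact div_mul_cancel₀ _ (pow_ne_zero n (ne_of_gt hμ0))
    have h4 : C * ν ^ (R + n + 1) = (C * ν ^ (R + 1) * (ν/μ) ^ n) * μ ^ n := by
      calc C * ν ^ (R + n + 1) = C * ν ^ (R + 1) * ν ^ n := by
            rw [show R + n + 1 = (R + 1) + n by omega, pow_add, mul_assoc]
        _ = C * ν ^ (R + 1) * ((ν / μ) ^ n * μ ^ n) := by rw [e1]
        _ = (C * ν ^ (R + 1) * (ν/μ) ^ n) * μ ^ n := by ring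
    calc C * ν ^ (R + n + 1) = (C * ν ^ (R + 1) * (ν/μ) ^ n) * μ ^ n := h4
      _ ≤ μ * μ ^ n := mul_le_mul_of_nonneg_right h3 (by positivity)
      _ = μ ^ (n + 1) := by ring
  set s : ℕ → Set Γ := fun n => if n < n0 then (∅ : Set Γ)
    else {v | G.dist 1 v = R + n + 1} with hsdef
  have hsn0 : ∀ n, ¬ n < n0 → s n = {v | G.dist 1 v = R + n + 1} := by
    intro n hn
    rw [hsdef]
    simp [hn]
  -- the burn bound
  have hburn : ∀ n, burnSet G X₀ s n ⊆ ball G 1 (R + min n n0) := by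
    intro n
    induction n with
    | zero =>
      intro v hv
      have := hR v hv
      show G.dist 1 v ≤ R + min 0 n0
      omega
    | succ n ih =>
      rintro v (hv | ⟨hvp, u, hu, hadj⟩)
      · exact ball_mono _ _ (by omega) (ih hv)
      · have hd : G.dist 1 v ≤ R + min n n0 + 1 := by
          calc G.dist 1 v ≤ G.dist 1 u + G.dist u v := hc.dist_triangle
            _ ≤ (R + min n n0) + 1 := add_le_add (ih hu) (adj_dist_le hadj)
        by_cases hle : n + 1 ≤ n0
        · show G.dist 1 v ≤ R + min (n+1) n0
          omega
        · have hne : G.dist 1 v ≠ R + n0 + 1 := by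
            intro heq
            apply hvp
            have hv0 : v ∈ s n0 := by
              rw [hsn0 n0 (lt_irrefl n0)]
              exact heq
            exact protSet_mono s (by omega : n0 + 1 ≤ n + 1)
              (subset_protSet_succ s n0 hv0)
          show G.dist 1 v ≤ R + min (n+1) n0
          omega
  refine ⟨s, ?_, ?_⟩
  · -- valid strategy
    intro n
    by_cases hn : n < n0
    · refine ⟨?_, ?_, ?_⟩ <;> simp [hsdef, hn]
    · have hsn := hsn0 n hn
      have hsub : s n ⊆ ball G 1 (R + n + 1) := by
        rw [hsn]
        intro v hv
        exact le_of_eq hv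
      refine ⟨(hfin _).subset hsub, ?_, ?_⟩
      · have h1 : (s n).ncard ≤ (ball G 1 (R + n + 1)).ncard :=
          Set.ncard_le_ncard hsub (hfin _)
        have h2 : ((s n).ncard : ℝ) ≤ (⌈μ ^ (n+1)⌉₊ : ℝ) := by
          calc ((s n).ncard : ℝ) ≤ b (R + n + 1) := Nat.cast_le.mpr h1
            _ ≤ C * ν ^ (R + n + 1) := hC _
            _ ≤ μ ^ (n + 1) := hkey n (by omega)
            _ ≤ (⌈μ ^ (n+1)⌉₊ : ℝ) := Nat.le_ceil _
        exact_mod_cast h2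
      · rw [Set.disjoint_left]
        intro v hv hvb
        have h1 := hburn n hvb
        rw [hsn] at hv
        have h2 : G.dist 1 v = R + n + 1 := hv
        have h3 : G.dist 1 v ≤ R + min n n0 := h1
        omega
  · -- contains the fire
    have h1 : (⋃ n, burnSet G X₀ s n) ⊆ ball G 1 (R + n0) := by
      refine Set.iUnion_subset (fun n => ?_)
      exact (hburn n).trans (ball_mono _ _ (by omega))
    exact (hfin _).subset h1

end Upper

lemma expContainment_mono {V : Type*} {G : SimpleGraph V} {l1 l2 : ℝ≥0∞} (h : l1 ≤ l2)
    (hE : ExpContainment G l1) : ExpContainment G l2 := by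
  obtain ⟨f, ⟨c, hc⟩, h2⟩ := hE
  exact ⟨f, ⟨c, fun n => (hc n).trans
    (mul_le_mul_right (pow_le_pow_left' h n) c)⟩, h2⟩

theorem stmt_12_aux {Γ : Type*} [Group Γ] (S : Finset Γ)
    (hgen : Subgroup.closure (S : Set Γ) = ⊤) (α : ℝ)
    (hα : Filter.Tendsto
      (fun k : ℕ => ((ball (cayley Γ (S : Set Γ)) 1 k).ncard : ℝ) ^ ((k : ℝ)⁻¹))
      Filter.atTop (nhds α))
    (hα1 : 1 < α) :
    (∀ lam : ℝ, lam < α → ¬ ExpContainment (cayley Γ (S : Set Γ)) (ENNReal.ofReal lam)) ∧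
    lambdaC (cayley Γ (S : Set Γ)) = ENNReal.ofReal α := by
  have hα0 : (0:ℝ) < α := lt_trans one_pos hα1
  have part1 : ∀ lam : ℝ, lam < α →
      ¬ ExpContainment (cayley Γ (S : Set Γ)) (ENNReal.ofReal lam) := by
    intro lam hlam hExp
    set lam1 : ℝ := (max lam 1 + α) / 2 with hl1
    have hmax : max lam 1 < α := max_lt hlam hα1
    have h1 : 1 < lam1 := by
      have := le_max_right lam 1
      rw [hl1]; linarith
    have h2 : lam1 < α := by rw [hl1]; linarith
    have hle : ENNReal.ofReal lam ≤ ENNReal.ofReal lam1 := by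
      apply ENNReal.ofReal_le_ofReal
      have := le_max_left lam 1
      rw [hl1]; linarith
    exact no_containment hgen hα hα1 h1 h2 (expContainment_mono hle hExp)
  refine ⟨part1, le_antisymm ?_ ?_⟩
  · apply ENNReal.le_of_forall_pos_le_add
    intro ε hε _
    have hmem : ExpContainment (cayley Γ (S : Set Γ)) (ENNReal.ofReal (α + ε)) :=
      containment_of_gt hgen hα hα1 (by
        have : (0:ℝ) < ε := hε
        linarith)
    have hsle : lambdaC (cayley Γ (S : Set Γ)) ≤ ENNReal.ofReal (α + ε) := sInf_le hmem
    refine hsle.trans ?_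
    rw [ENNReal.ofReal_add hα0.le ε.coe_nonneg, ENNReal.ofReal_coe_nnreal]
  · apply le_sInf
    intro y hy
    by_contra hlt
    push_neg at hlt
    have hty : y.toReal < α := ENNReal.toReal_lt_of_lt_ofReal hlt
    have hytop : y ≠ ⊤ := ne_top_of_lt hlt
    have hy2 : ExpContainment (cayley Γ (S : Set Γ)) (ENNReal.ofReal y.toReal) := by
      rw [ENNReal.ofReal_toReal hytop]
      exact hy
    exact part1 y.toReal hty hy2

/-- a Cayley graph of a finitely generated group with exponential growth
rate `α > 1` satisfies exponential containment of no rate `lam < α`; hence `λ_c = α`. -/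
theorem stmt_12 {Γ : Type*} [Group Γ] (S : Finset Γ)
    (hgen : Subgroup.closure (S : Set Γ) = ⊤) (α : ℝ)
    (hα : Filter.Tendsto
      (fun k : ℕ => ((ball (cayley Γ (S : Set Γ)) 1 k).ncard : ℝ) ^ ((k : ℝ)⁻¹))
      Filter.atTop (nhds α))
    (hα1 : 1 < α) :
    (∀ lam : ℝ, lam < α → ¬ ExpContainment (cayley Γ (S : Set Γ)) (ENNReal.ofReal lam)) ∧
    lambdaC (cayley Γ (S : Set Γ)) = ENNReal.ofReal α := by
  exact ⟨(stmt_12_aux S hgen α hα hα1).1, (stmt_12_aux S hgen α hα hα1).2⟩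
end

section
/- Let T be a locally finite tree rooted at r and let s(V') be a successful containment strategy for the initial fire B_r(k) with protection sequence (f_n), where V' is a finite vertex set each of whose elements is protected before it burns. Then the set Π of parent edges of vertices of V' is a cutset separating r from infinity, and for each n, |{v ∈ V' : |v| = n}| ≤ Σ_{i=1}^{n−k} f_i. -/
open scoped ENNReal NNReal

open Firefight

section Helpers

variable {V : Type*} {s : ℕ → Set V}

lemma protSet_subset {W : Set V} (h : ∀ n, s n ⊆ W) : ∀ N, protSet s N ⊆ W
  | 0 => by simp [protSet]
  | N + 1 => by
      simp only [protSet]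
      exact Set.union_subset (protSet_subset h N) (h N)

lemma protSet_mono : ∀ {m n : ℕ}, m ≤ n → protSet s m ⊆ protSet s n := by
  intro m n h
  induction n with
  | zero => simpa [Nat.le_zero.mp h] using subset_rfl
  | succ n ih =>
      rcases Nat.lt_or_ge m (n+1) with h' | h'
      · exact (ih (Nat.lt_succ_iff.mp h')).trans (by simp [protSet])
      · have : m = n + 1 := le_antisymm h h'
        simp [this]

lemma burnSet_mono {G : SimpleGraph V} {X₀ : Set V} :
    ∀ {m n : ℕ}, m ≤ n → burnSet G X₀ s m ⊆ burnSet G X₀ s n := by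
  intro m n h
  induction n with
  | zero => simpa [Nat.le_zero.mp h] using subset_rfl
  | succ n ih =>
      rcases Nat.lt_or_ge m (n+1) with h' | h'
      · exact (ih (Nat.lt_succ_iff.mp h')).trans (by simp [burnSet])
      · have : m = n + 1 := le_antisymm h h'
        simp [this]

lemma protSet_card {G : SimpleGraph V} {f : ℕ → ℕ} {X₀ : Set V}
    (hval : ValidStrategy G f X₀ s) :
    ∀ N, (protSet s N).Finite ∧ (protSet s N).ncard ≤ ∑ i ∈ Finset.range N, f (i + 1)
  | 0 => by simp [protSet]
  | N + 1 => by
      obtain ⟨hfin, hcard⟩ := protSet_card hval N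
      obtain ⟨hf, hc, -⟩ := hval N
      refine ⟨hfin.union hf, ?_⟩
      calc (protSet s N ∪ s N).ncard ≤ (protSet s N).ncard + (s N).ncard :=
            Set.ncard_union_le _ _
        _ ≤ (∑ i ∈ Finset.range N, f (i + 1)) + f (N + 1) := add_le_add hcard hc
        _ = ∑ i ∈ Finset.range (N + 1), f (i + 1) := (Finset.sum_range_succ _ _).symm

/-- Every vertex at distance `n + 1` from `r` has a parent. -/
lemma exists_parent {G : SimpleGraph V} (hc : G.Connected) {r v : V} {n : ℕ}
    (h : G.dist r v = n + 1) : ∃ u, G.Adj u v ∧ G.dist r u = n := by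
  obtain ⟨p, hp⟩ := hc.exists_walk_length_eq_dist r v
  rw [h] at hp
  have hq : p.reverse.length = n + 1 := by simpa using hp
  cases hq' : p.reverse with
  | nil => rw [hq'] at hq; simp at hq
  | cons hadj q =>
      rename_i u
      rw [hq'] at hq
      simp only [SimpleGraph.Walk.length_cons, Nat.succ_inj] at hq
      refine ⟨u, hadj.symm, le_antisymm ?_ ?_⟩
      · calc G.dist r u ≤ q.reverse.length := SimpleGraph.dist_le _
          _ = n := by simpa using hq
      · have h1 : G.dist u v = 1 := SimpleGraph.dist_eq_one_iff_adj.mpr hadj.symm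
        have := hc.dist_triangle (u := r) (v := u) (w := v)
        omega

end Helpers

/-- if `s` is a successful containment strategy for the initial fire
`B_r(k)` on a tree, protecting exactly the vertices of a finite set `V'`, each of which is
protected before the (unimpeded) fire would reach it, then the set of parent edges of
vertices of `V'` is a cutset separating `r` from infinity, and
`|{v ∈ V' : |v| = n}| ≤ ∑_{i=1}^{n-k} f i` for every `n`. -/
theorem stmt_18 {V : Type*} (T : SimpleGraph V) [Infinite V] (hlf : T.LocallyFinite)
    (ht : T.IsTree) (r : V) (f : ℕ → ℕ) (k : ℕ) (V' : Finset V) (s : ℕ → Set V)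
    (hval : ValidStrategy T f (ball T r k) s)
    (hcont : ContainsFire T (ball T r k) s)
    (hsub : ∀ n, s n ⊆ (V' : Set V))
    (hall : ∀ v ∈ V', ∃ m, v ∈ s m ∧ v ∉ ball T r (k + m)) :
    IsCutset T r {e : Sym2 V | ∃ v ∈ V', ∃ u : V,
      T.Adj u v ∧ T.dist r u + 1 = T.dist r v ∧ e = Sym2.mk u v} ∧
    ∀ n : ℕ, ((V' : Set V) ∩ {v | T.dist r v = n}).ncard ≤
      ∑ i ∈ Finset.Icc 1 (n - k), f i := by
  classical
  set Pi : Set (Sym2 V) := {e : Sym2 V | ∃ v ∈ V', ∃ u : V,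
      T.Adj u v ∧ T.dist r u + 1 = T.dist r v ∧ e = Sym2.mk u v} with hPi
  have hconn := ht.isConnected
  -- sum over Icc equals sum over range
  have hsum : ∀ N : ℕ, ∑ i ∈ Finset.Icc 1 N, f i = ∑ i ∈ Finset.range N, f (i + 1) := by
    intro N
    rw [← Finset.Ico_add_one_right_eq_Icc, Finset.sum_Ico_eq_sum_range]
    simp [add_comm]
  -- no member of V' is reachable from r after deleting Pi
  have hnotreach : ∀ v ∈ V', ¬ (T.deleteEdges Pi).Reachable r v := by
    intro v hv hreach
    obtain ⟨m, -, hball⟩ := hall v hv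
    have hd : T.dist r v ≠ 0 := by
      intro h0
      exact hball (by simp [ball, h0])
    obtain ⟨n, hn⟩ : ∃ n, T.dist r v = n + 1 := ⟨T.dist r v - 1, by omega⟩
    obtain ⟨u, hadj, hu⟩ := exists_parent hconn hn
    have he : s(u, v) ∈ Pi := ⟨v, hv, u, hadj, by omega, rfl⟩
    -- the edge s(u,v) is a bridge
    have hbr : ¬ (T.deleteEdges {s(u, v)}).Reachable u v :=
      ((SimpleGraph.isBridge_iff).mp
        (SimpleGraph.isAcyclic_iff_forall_adj_isBridge.mp ht.IsAcyclic hadj))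
    have hle : T.deleteEdges Pi ≤ T.deleteEdges {s(u, v)} := by
      intro a b hab
      rw [SimpleGraph.deleteEdges_adj] at hab ⊢
      refine ⟨hab.1, ?_⟩
      intro hmem
      exact hab.2 (by simpa using (Set.mem_singleton_iff.mp hmem ▸ he))
    -- r is reachable to u avoiding the edge
    have hru : (T.deleteEdges {s(u, v)}).Reachable r u := by
      obtain ⟨p, hp⟩ := hconn.exists_walk_length_eq_dist r u
      have hnov : v ∉ p.support := by
        intro hvs
        have : T.dist r v ≤ (p.takeUntil v hvs).length := SimpleGraph.dist_le _
        have hle' := SimpleGraph.Walk.length_takeUntil_le p hvs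
        omega
      refine ⟨p.toDeleteEdges _ ?_⟩
      intro e hep hemem
      rw [Set.mem_singleton_iff] at hemem
      subst hemem
      exact hnov (SimpleGraph.Walk.snd_mem_support_of_mem_edges p hep)
    exact hbr (hru.symm.trans (hreach.mono hle))
  -- every vertex reachable from r after deleting Pi eventually burns
  have hburn : ∀ n : ℕ, ∀ v : V, (T.deleteEdges Pi).Reachable r v →
      T.dist r v = n → v ∈ burnSet T (ball T r k) s (n - k) := by
    intro n
    induction n with
    | zero =>
        intro v _ hd
        rw [Nat.zero_sub]
        show v ∈ ball T r k
        simp only [ball, Set.mem_setOf_eq]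
        omega
    | succ n ih =>
        intro v hreach hd
        rcases Nat.lt_or_ge n k with hnk | hnk
        · -- n + 1 ≤ k : v is in the initial ball
          have h0 : n + 1 - k = 0 := by omega
          rw [h0]
          show v ∈ ball T r k
          simp only [ball, Set.mem_setOf_eq]
          omega
        · -- v is not protected, its parent burns
          have hvV : v ∉ (V' : Set V) := fun hv => hnotreach v hv hreach
          obtain ⟨u, hadj, hu⟩ := exists_parent hconn hd
          have heno : s(u, v) ∉ Pi := by
            rintro ⟨v₂, hv₂, u₂, hadj₂, hd₂, he₂⟩
            rcases Sym2.eq_iff.mp he₂.symm with ⟨h1, h2⟩ | ⟨h1, h2⟩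
            · exact hvV (h2 ▸ hv₂)
            · subst h1; subst h2; omega
          have hadj' : (T.deleteEdges Pi).Adj u v :=
            SimpleGraph.deleteEdges_adj.mpr ⟨hadj, heno⟩
          have hru : (T.deleteEdges Pi).Reachable r u :=
            hreach.trans hadj'.symm.reachable
          have hub := ih u hru hu
          have hstep : n + 1 - k = (n - k) + 1 := by omega
          rw [hstep]
          refine Set.mem_union_right _ ⟨?_, u, hub, hadj⟩
          intro hvp
          exact hvV (protSet_subset hsub _ hvp)
  constructor
  · constructor
    · rintro e ⟨v, hv, u, hadj, -, rfl⟩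
      exact hadj
    · refine hcont.subset ?_
      intro v hv
      exact Set.mem_iUnion.mpr ⟨T.dist r v - k, hburn _ v hv rfl⟩
  · intro n
    have hsubset : (V' : Set V) ∩ {v | T.dist r v = n} ⊆ protSet s (n - k) := by
      rintro v ⟨hv, hd⟩
      obtain ⟨m, hm, hball⟩ := hall v hv
      simp only [ball, Set.mem_setOf_eq, not_le] at hball
      have hmn : m + 1 ≤ n - k := by
        simp only [Set.mem_setOf_eq] at hd
        omega
      exact protSet_mono hmn (Set.mem_union_right _ hm)
    obtain ⟨hfin, hcard⟩ := protSet_card hval (n - k)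
    calc ((V' : Set V) ∩ {v | T.dist r v = n}).ncard ≤ (protSet s (n - k)).ncard :=
          Set.ncard_le_ncard hsubset hfin
      _ ≤ ∑ i ∈ Finset.range (n - k), f (i + 1) := hcard
      _ = ∑ i ∈ Finset.Icc 1 (n - k), f i := (hsum _).symm
end
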